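/- Let A = A₀ ⊕ A₁ be a ℤ/2-graded commutative ring (even elements central, odd elements anticommute among themselves), X a set, and P : X² → A₀ symmetric (P(x,y) = P(y,x)), G : X² → A₀ arbitrary, S : X² → A₀ antisymmetric (S(x,y) = −S(y,x)), F : X² → A₁. For points r, t_1, …, t_n, s ∈ X set t_0 := r, t_{n+1} := s, write G^k(x_0,…,x_k) := ∏_{i=0}^{k−1} G(x_i,x_{i+1}) and S^k(x_0,…,x_k) := ∏_{i=0}^{k−1} S(x_i,x_{i+1}) (empty products equal 1), and define Π^{(n+2)}(r;t_1,…,t_n;s) := ∑_{α=0}^{n} (−1)^α G^α(t_α,…,t_1,r) P(t_α,t_{α+1}) G^{n−α}(t_{α+1},…,t_n,s) − ∑_{α=0}^{n−1} ∑_{β=0}^{n−1−α} (−1)^α G^α(t_α,…,t_1,r) F(t_{α+1},t_α) S^β(t_{α+1},…,t_{α+β+1}) F(t_{α+β+1},t_{α+β+2}) G^{n−1−α−β}(t_{α+β+2},…,t_n,s). Then the reflection symmetry holds: Π^{(n+2)}(r;t_1,…,t_n;s) = (−1)^n Π^{(n+2)}(s;t_n,…,t_1;r). -/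

import Mathlib

/-- Ordered path product `f(x₀,x₁) f(x₁,x₂) ⋯ f(x_{k−1},x_k)` starting at `x`
through the list of subsequent points; the empty product is `1`. -/
def pathProd {A X : Type*} [Monoid A] (f : X → X → A) : X → List X → A
  | _, [] => 1
  | x, y :: l => f x y * pathProd f y l

/-- The fundamental linear chain block
`Π^{(n+2)}(r;t₁,…,tₙ;s) = ∑_{α=0}^{n} (−1)^α G^α(t_α,…,t₁,r) P(t_α,t_{α+1}) G^{n−α}(t_{α+1},…,tₙ,s)
 − ∑_{α=0}^{n−1} ∑_{β=0}^{n−1−α} (−1)^α G^α(t_α,…,t₁,r) F(t_{α+1},t_α)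
   S^β(t_{α+1},…,t_{α+β+1}) F(t_{α+β+1},t_{α+β+2}) G^{n−1−α−β}(t_{α+β+2},…,tₙ,s)`,
with `t₀ := r`, `t_{n+1} := s`. -/
def PiBlock {A X : Type*} [Ring A] (P G S F : X → X → A)
    (r : X) (ts : List X) (s : X) : A :=
  let n := ts.length
  let pt : ℕ → X := fun i => (r :: (ts ++ [s])).getD i s
  (∑ α ∈ Finset.range (n + 1),
      (-1 : A) ^ α * pathProd G (pt α) ((List.range α).reverse.map pt)
        * P (pt α) (pt (α + 1))
        * pathProd G (pt (α + 1)) ((List.range' (α + 2) (n - α)).map pt))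
  - (∑ α ∈ Finset.range n, ∑ β ∈ Finset.range (n - α),
      (-1 : A) ^ α * pathProd G (pt α) ((List.range α).reverse.map pt)
        * F (pt (α + 1)) (pt α)
        * pathProd S (pt (α + 1)) ((List.range' (α + 2) β).map pt)
        * F (pt (α + β + 1)) (pt (α + β + 2))
        * pathProd G (pt (α + β + 2)) ((List.range' (α + β + 3) (n - 1 - α - β)).map pt))

/-- The fermionic linear chain block
`Π_F^{(n+2)}(r;t₁,…,tₙ;s) = ∑_{α=0}^{n} S^α(r,t₁,…,t_α) F(t_α,t_{α+1}) G^{n−α}(t_{α+1},…,tₙ,s)`,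
with `t₀ := r`, `t_{n+1} := s`. -/
def PiFBlock {A X : Type*} [Ring A] (S F G : X → X → A)
    (r : X) (ts : List X) (s : X) : A :=
  let n := ts.length
  let pt : ℕ → X := fun i => (r :: (ts ++ [s])).getD i s
  ∑ α ∈ Finset.range (n + 1),
    pathProd S (pt 0) ((List.range' 1 α).map pt)
      * F (pt α) (pt (α + 1))
      * pathProd G (pt (α + 1)) ((List.range' (α + 2) (n - α)).map pt)

namespace PiAux

variable {A X : Type*} [Ring A]

def fwd (f : X → X → A) (pt : ℕ → X) : ℕ → ℕ → A
  | _, 0 => 1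
  | a, k+1 => f (pt a) (pt (a+1)) * fwd f pt (a+1) k

def bwd (f : X → X → A) (pt : ℕ → X) : ℕ → A
  | 0 => 1
  | m+1 => f (pt (m+1)) (pt m) * bwd f pt m

lemma pathProd_range' (f : X → X → A) (pt : ℕ → X) (a k : ℕ) :
    pathProd f (pt a) ((List.range' (a+1) k).map pt) = fwd f pt a k := by
  induction k generalizing a with
  | zero => simp [pathProd, fwd]
  | succ k ih => rw [List.range'_succ]; simp only [List.map_cons, pathProd, fwd]; rw [ih]

lemma pathProd_revRange (f : X → X → A) (pt : ℕ → X) (m : ℕ) :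
    pathProd f (pt m) ((List.range m).reverse.map pt) = bwd f pt m := by
  induction m with
  | zero => simp [pathProd, bwd]
  | succ m ih =>
      rw [List.range_succ, List.reverse_append]
      simp only [List.reverse_cons, List.reverse_nil, List.nil_append, List.map_cons,
        List.cons_append, pathProd, List.singleton_append, List.append_eq]
      rw [ih, bwd]

lemma pathProd_range'_one (f : X → X → A) (pt : ℕ → X) (a k : ℕ) :
    pathProd f (pt (a+1)) ((List.range' (a+2) k).map pt) = fwd f pt (a+1) k :=
  pathProd_range' f pt (a+1) k

lemma pathProd_range'_two (f : X → X → A) (pt : ℕ → X) (a b k : ℕ) :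
    pathProd f (pt (a+b+2)) ((List.range' (a+b+3) k).map pt) = fwd f pt (a+b+2) k :=
  pathProd_range' f pt (a+b+2) k

def ptOf (r s : X) (ts : List X) : ℕ → X := fun i => (r :: (ts ++ [s])).getD i s

lemma ptOf_reflect (r s : X) (ts : List X) (i : ℕ) (hi : i ≤ ts.length + 1) :
    ptOf s r ts.reverse i = ptOf r s ts (ts.length + 1 - i) := by
  have hrev : (s :: (ts.reverse ++ [r])) = (r :: (ts ++ [s])).reverse := by simp
  have hL : (r :: (ts ++ [s])).length = ts.length + 2 := by simp
  show (s :: (ts.reverse ++ [r])).getD i r = (r :: (ts ++ [s])).getD (ts.length + 1 - i) s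
  rw [hrev]
  rw [List.getD_eq_getElem _ _ (by simp; omega), List.getD_eq_getElem _ _ (by simp)]
  rw [List.getElem_reverse]
  congr 1
  rw [hL]
  omega

lemma PiBlock_eq (P G S F : X → X → A) (r : X) (ts : List X) (s : X) :
    PiBlock P G S F r ts s =
      (∑ α ∈ Finset.range (ts.length + 1),
        (-1 : A) ^ α * bwd G (ptOf r s ts) α
          * P (ptOf r s ts α) (ptOf r s ts (α+1))
          * fwd G (ptOf r s ts) (α+1) (ts.length - α))
      - ∑ α ∈ Finset.range ts.length, ∑ β ∈ Finset.range (ts.length - α),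
        (-1 : A) ^ α * bwd G (ptOf r s ts) α
          * F (ptOf r s ts (α+1)) (ptOf r s ts α)
          * fwd S (ptOf r s ts) (α+1) β
          * F (ptOf r s ts (α+β+1)) (ptOf r s ts (α+β+2))
          * fwd G (ptOf r s ts) (α+β+2) (ts.length - 1 - α - β) := by
  have h0 : PiBlock P G S F r ts s =
    (∑ α ∈ Finset.range (ts.length + 1),
        (-1 : A) ^ α * pathProd G (ptOf r s ts α) ((List.range α).reverse.map (ptOf r s ts))
          * P (ptOf r s ts α) (ptOf r s ts (α + 1))
          * pathProd G (ptOf r s ts (α + 1)) ((List.range' (α + 2) (ts.length - α)).map (ptOf r s ts)))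
    - (∑ α ∈ Finset.range ts.length, ∑ β ∈ Finset.range (ts.length - α),
        (-1 : A) ^ α * pathProd G (ptOf r s ts α) ((List.range α).reverse.map (ptOf r s ts))
          * F (ptOf r s ts (α + 1)) (ptOf r s ts α)
          * pathProd S (ptOf r s ts (α + 1)) ((List.range' (α + 2) β).map (ptOf r s ts))
          * F (ptOf r s ts (α + β + 1)) (ptOf r s ts (α + β + 2))
          * pathProd G (ptOf r s ts (α + β + 2)) ((List.range' (α + β + 3) (ts.length - 1 - α - β)).map (ptOf r s ts))) := rfl
  rw [h0]
  simp only [pathProd_revRange, pathProd_range'_one, pathProd_range'_two]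


lemma fwd_central {f : X → X → A} (hf : ∀ x y a, f x y * a = a * f x y)
    (pt : ℕ → X) (a k : ℕ) (b : A) : fwd f pt a k * b = b * fwd f pt a k := by
  induction k generalizing a b with
  | zero => simp [fwd]
  | succ k ih =>
      simp only [fwd]
      rw [mul_assoc, ih, ← mul_assoc, hf, mul_assoc]

lemma bwd_central {f : X → X → A} (hf : ∀ x y a, f x y * a = a * f x y)
    (pt : ℕ → X) (m : ℕ) (b : A) : bwd f pt m * b = b * bwd f pt m := by
  induction m generalizing b with
  | zero => simp [bwd]
  | succ m ih =>
      simp only [bwd]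
      rw [mul_assoc, ih, ← mul_assoc, hf, mul_assoc]

lemma fwd_succ_right (f : X → X → A) (pt : ℕ → X) (a k : ℕ) :
    fwd f pt a (k+1) = fwd f pt a k * f (pt (a+k)) (pt (a+k+1)) := by
  induction k generalizing a with
  | zero => simp [fwd]
  | succ k ih =>
      show f (pt a) (pt (a+1)) * fwd f pt (a+1) (k+1) = _
      rw [ih (a+1), ← mul_assoc]
      have h1 : a+1+k = a+k+1 := by omega
      rw [h1]
      rfl

lemma bwd_eq_fwd_flip {f : X → X → A} (hf : ∀ x y a, f x y * a = a * f x y)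
    (pt : ℕ → X) (m : ℕ) : bwd f pt m = fwd (fun x y => f y x) pt 0 m := by
  induction m with
  | zero => rfl
  | succ m ih =>
      show f (pt (m+1)) (pt m) * bwd f pt m = _
      rw [ih, hf, fwd_succ_right]
      simp only [Nat.zero_add]

lemma fwd_reflect {f : X → X → A} (hf : ∀ x y a, f x y * a = a * f x y)
    {pt q : ℕ → X} {n : ℕ} (h : ∀ i ≤ n+1, q i = pt (n+1-i))
    (a k : ℕ) (hk : a + k ≤ n+1) :
    fwd f q a k = fwd (fun x y => f y x) pt (n+1-a-k) k := by
  induction k generalizing a with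
  | zero => rfl
  | succ k ih =>
      show f (q a) (q (a+1)) * fwd f q (a+1) k = _
      rw [ih (a+1) (by omega), h a (by omega), h (a+1) (by omega)]
      have e1 : n+1-(a+1)-k = n+1-a-(k+1) := by omega
      rw [e1, hf]
      rw [fwd_succ_right]
      have e2 : n+1-a-(k+1)+k = n+1-(a+1) := by omega
      rw [e2]
      have e3 : n+1-(a+1)+1 = n+1-a := by omega
      rw [e3]

lemma fwd_neg (f : X → X → A) (pt : ℕ → X) (a k : ℕ) :
    fwd (fun x y => -(f x y)) pt a k = (-1)^k * fwd f pt a k := by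
  induction k generalizing a with
  | zero => simp [fwd]
  | succ k ih =>
      show -(f (pt a) (pt (a+1))) * fwd (fun x y => -(f x y)) pt (a+1) k = _
      rw [ih]
      show _ = (-1)^(k+1) * (f (pt a) (pt (a+1)) * fwd f pt (a+1) k)
      rcases neg_one_pow_eq_or A k with hk | hk <;> rw [pow_succ] <;> rw [hk] <;>
        simp [neg_mul, mul_neg, mul_assoc]

lemma bwd_reflect {f : X → X → A} (hf : ∀ x y a, f x y * a = a * f x y)
    {pt q : ℕ → X} {n : ℕ} (h : ∀ i ≤ n+1, q i = pt (n+1-i))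
    (m : ℕ) (hm : m ≤ n+1) : bwd f q m = fwd f pt (n+1-m) m := by
  rw [bwd_eq_fwd_flip hf]
  have hf' : ∀ x y a, (fun (x y : X) => f y x) x y * a = a * (fun (x y : X) => f y x) x y :=
    fun x y a => hf y x a
  rw [fwd_reflect hf' h 0 m (by omega)]
  have e : n+1-0-m = n+1-m := by omega
  rw [e]

lemma fwd_reflect_bwd {f : X → X → A} (hf : ∀ x y a, f x y * a = a * f x y)
    {pt q : ℕ → X} {n : ℕ} (h : ∀ i ≤ n+1, q i = pt (n+1-i))
    (a k : ℕ) (hk : a + k = n+1) : fwd f q a k = bwd f pt k := by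
  rw [fwd_reflect hf h a k (by omega)]
  have e : n+1-a-k = 0 := by omega
  rw [e, ← bwd_eq_fwd_flip hf]

lemma fwd_reflect_anti {f : X → X → A} (hf : ∀ x y a, f x y * a = a * f x y)
    (hanti : ∀ x y, f x y = -f y x)
    {pt q : ℕ → X} {n : ℕ} (h : ∀ i ≤ n+1, q i = pt (n+1-i))
    (a k : ℕ) (hk : a + k ≤ n+1) :
    fwd f q a k = (-1)^k * fwd f pt (n+1-a-k) k := by
  rw [fwd_reflect hf h a k hk]
  have e : (fun (x y : X) => f y x) = fun x y => -(f x y) := by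
    funext x y; exact hanti y x
  rw [e, fwd_neg]

lemma cpull (c : A) (hc : ∀ x, c * x = x * c) (x y : A) : x * (c * y) = c * (x * y) := by
  rw [← mul_assoc, ← hc x, mul_assoc]

lemma neg_one_pow_central (k : ℕ) : ∀ x : A, (-1:A)^k * x = x * (-1:A)^k := by
  intro x
  rcases neg_one_pow_eq_or A k with h | h <;> rw [h] <;> simp

lemma sign_cancel (m k : ℕ) : (-1:A)^(m+k) * (-1:A)^k = (-1:A)^m := by
  rw [pow_add, mul_assoc, ← pow_add, ← two_mul, pow_mul, neg_one_sq, one_pow, mul_one]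

lemma sign1 (n α : ℕ) (h : α ≤ n) : (-1:A)^n * (-1:A)^(n-α) = (-1:A)^α := by
  obtain ⟨c, rfl⟩ := Nat.exists_eq_add_of_le h
  rw [Nat.add_sub_cancel_left]
  exact sign_cancel α c

lemma key1 (n α : ℕ) (hα : α ≤ n) {b p w : A}
    (hb : ∀ x, b * x = x * b) (hp : ∀ x, p * x = x * p) (hw : ∀ x, w * x = x * w) :
    (-1:A)^α * b * p * w = (-1:A)^n * ((-1:A)^(n-α) * w * p * b) := by
  have stepP : w * (p * b) = b * (p * w) := by
    rw [hp b, cpull b hb w p, hw p]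
  symm
  calc (-1:A)^n * ((-1:A)^(n-α) * w * p * b)
      = (-1:A)^n * ((-1:A)^(n-α) * (w * (p * b))) := by simp only [mul_assoc]
    _ = ((-1:A)^n * (-1:A)^(n-α)) * (w * (p * b)) := by simp only [mul_assoc]
    _ = (-1:A)^α * (w * (p * b)) := by rw [sign1 n α hα]
    _ = (-1:A)^α * (b * (p * w)) := by rw [stepP]
    _ = (-1:A)^α * b * p * w := by simp only [mul_assoc]

lemma key2 (n α β : ℕ) (hαβ : α + β + 1 ≤ n) {b u w f1 f2 : A}
    (hb : ∀ x, b * x = x * b) (hu : ∀ x, u * x = x * u) (hw : ∀ x, w * x = x * w)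
    (hf : f2 * f1 = -(f1 * f2)) :
    (-1:A)^α * b * f1 * u * f2 * w
      = (-1:A)^n * ((-1:A)^(n-1-α-β) * w * f2 * ((-1:A)^β * u) * f1 * b) := by
  have hs : (-1:A)^n * ((-1:A)^(n-1-α-β) * (-1:A)^β) = -(-1:A)^α := by
    obtain ⟨c, rfl⟩ := Nat.exists_eq_add_of_le hαβ
    rw [show α+β+1+c-1-α-β = c from by omega, show α+β+1+c = ((α+1)+β)+c from by omega,
      ← mul_assoc, sign_cancel ((α+1)+β) c, sign_cancel (α+1) β, pow_succ, mul_neg_one]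
  have stepA : b * (f1 * (u * (f2 * w))) = b * (w * (u * (f1 * f2))) := by
    rw [show f2*w = w*f2 from (hw f2).symm, cpull w hw u f2, cpull w hw f1 (u*f2),
      cpull u hu f1 f2]
  have stepB : w * (f2 * (u * (f1 * b))) = -(b * (w * (u * (f1 * f2)))) := by
    rw [cpull u hu f2 (f1*b), show f1*b = b*f1 from (hb f1).symm, cpull b hb f2 f1, hf]
    rw [mul_neg, mul_neg, mul_neg]
    rw [cpull b hb u (f1*f2), cpull b hb w (u*(f1*f2))]
  calc (-1:A)^α * b * f1 * u * f2 * w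
      = (-1:A)^α * (b * (f1 * (u * (f2 * w)))) := by simp only [mul_assoc]
    _ = (-1:A)^α * (b * (w * (u * (f1 * f2)))) := by rw [stepA]
    _ = -(-1:A)^α * -(b * (w * (u * (f1 * f2)))) := by rw [neg_mul_neg]
    _ = -(-1:A)^α * (w * (f2 * (u * (f1 * b)))) := by rw [stepB]
    _ = ((-1:A)^n * ((-1:A)^(n-1-α-β) * (-1:A)^β)) * (w * (f2 * (u * (f1 * b)))) := by rw [hs]
    _ = (-1:A)^n * ((-1:A)^(n-1-α-β) * ((-1:A)^β * (w * (f2 * (u * (f1 * b)))))) := by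
        simp only [mul_assoc]
    _ = (-1:A)^n * ((-1:A)^(n-1-α-β) * (w * (f2 * ((-1:A)^β * (u * (f1 * b)))))) := by
        rw [cpull _ (neg_one_pow_central β) f2 (u*(f1*b)),
          cpull _ (neg_one_pow_central β) w (f2*(u*(f1*b)))]
    _ = (-1:A)^n * ((-1:A)^(n-1-α-β) * w * f2 * ((-1:A)^β * u) * f1 * b) := by
        simp only [mul_assoc]


end PiAux

/-- reflection symmetry of the fundamental linear chain block:
`Π^{(n+2)}(r;t₁,…,tₙ;s) = (−1)ⁿ Π^{(n+2)}(s;tₙ,…,t₁;r)`, in a ℤ/2-graded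
commutative ring with `P, G, S` even (central), `P` symmetric, `S` antisymmetric,
and `F` odd (values pairwise anticommute). -/
theorem PiBlock_reflection {A X : Type*} [Ring A] (P G S F : X → X → A)
    (hPsymm : ∀ x y, P x y = P y x)
    (hSanti : ∀ x y, S x y = -S y x)
    (hPcentral : ∀ x y a, P x y * a = a * P x y)
    (hGcentral : ∀ x y a, G x y * a = a * G x y)
    (hScentral : ∀ x y a, S x y * a = a * S x y)
    (hFodd : ∀ x y z w, F x y * F z w = -(F z w * F x y))
    (r s : X) (ts : List X) :
    PiBlock P G S F r ts s = (-1 : A) ^ ts.length * PiBlock P G S F s ts.reverse r := by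
  classical
  have hrefl : ∀ i ≤ ts.length + 1,
      PiAux.ptOf s r ts.reverse i = PiAux.ptOf r s ts (ts.length + 1 - i) :=
    fun i hi => PiAux.ptOf_reflect r s ts i hi
  rw [PiAux.PiBlock_eq P G S F r ts s, PiAux.PiBlock_eq P G S F s ts.reverse r]
  simp only [List.length_reverse]
  set n := ts.length with hn
  set pt := PiAux.ptOf r s ts with hpt
  set pt' := PiAux.ptOf s r ts.reverse with hpt'
  rw [mul_sub]
  congr 1
  · -- single sum
    rw [Finset.mul_sum]
    refine Finset.sum_nbij' (fun α => n - α) (fun α => n - α) ?_ ?_ ?_ ?_ ?_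
    · intro a ha; simp only [Finset.mem_range] at *; omega
    · intro a ha; simp only [Finset.mem_range] at *; omega
    · intro a ha; simp only [Finset.mem_range] at ha; omega
    · intro a ha; simp only [Finset.mem_range] at ha; omega
    · intro α hα
      simp only [Finset.mem_range] at hα
      have hα' : α ≤ n := by omega
      rw [PiAux.bwd_reflect hGcentral hrefl (n-α) (by omega)]
      rw [show n-(n-α) = α from by omega]
      rw [PiAux.fwd_reflect_bwd hGcentral hrefl (n-α+1) α (by omega)]
      rw [hrefl (n-α) (by omega), hrefl (n-α+1) (by omega)]
      rw [show n+1-(n-α) = α+1 from by omega, show n+1-(n-α+1) = α from by omega]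
      rw [hPsymm (pt (α+1)) (pt α)]
      exact PiAux.key1 n α hα' (PiAux.bwd_central hGcentral pt α)
        (fun x => hPcentral _ _ x) (PiAux.fwd_central hGcentral pt (α+1) (n-α))
  · -- double sum
    simp only [Finset.mul_sum]
    rw [Finset.sum_sigma' (Finset.range n) (fun a => Finset.range (n - a)),
      Finset.sum_sigma' (Finset.range n) (fun a => Finset.range (n - a))]
    refine Finset.sum_nbij' (fun p => ⟨n-1-p.1-p.2, p.2⟩) (fun p => ⟨n-1-p.1-p.2, p.2⟩)
      ?_ ?_ ?_ ?_ ?_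
    · intro p hp
      simp only [Finset.mem_sigma, Finset.mem_range] at *
      omega
    · intro p hp
      simp only [Finset.mem_sigma, Finset.mem_range] at *
      omega
    · intro p hp
      obtain ⟨a, b⟩ := p
      simp only [Finset.mem_sigma, Finset.mem_range] at hp
      dsimp only at hp ⊢
      have e : n-1-(n-1-a-b)-b = a := by omega
      rw [e]
    · intro p hp
      obtain ⟨a, b⟩ := p
      simp only [Finset.mem_sigma, Finset.mem_range] at hp
      dsimp only at hp ⊢
      have e : n-1-(n-1-a-b)-b = a := by omega
      rw [e]
    · intro p hp
      obtain ⟨α, β⟩ := p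
      simp only [Finset.mem_sigma, Finset.mem_range] at hp
      have hm : α + β + 1 ≤ n := by omega
      dsimp only
      rw [PiAux.bwd_reflect hGcentral hrefl (n-1-α-β) (by omega)]
      rw [show n-1-(n-1-α-β)-β = α from by omega]
      rw [PiAux.fwd_reflect_bwd hGcentral hrefl (n-1-α-β+β+2) α (by omega)]
      rw [PiAux.fwd_reflect_anti hScentral hSanti hrefl (n-1-α-β+1) β (by omega)]
      rw [show n+1-(n-1-α-β+1)-β = α+1 from by omega]
      rw [hrefl (n-1-α-β) (by omega), hrefl (n-1-α-β+1) (by omega),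
        hrefl (n-1-α-β+β+1) (by omega), hrefl (n-1-α-β+β+2) (by omega)]
      rw [show n+1-(n-1-α-β) = α+β+2 from by omega, show n+1-(n-1-α-β+1) = α+β+1 from by omega,
        show n+1-(n-1-α-β+β+1) = α+1 from by omega, show n+1-(n-1-α-β+β+2) = α from by omega]
      exact PiAux.key2 n α β hm (PiAux.bwd_central hGcentral pt α)
        (PiAux.fwd_central hScentral pt (α+1) β)
        (PiAux.fwd_central hGcentral pt (α+β+2) (n-1-α-β))
        (hFodd _ _ _ _)
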